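/- Let T < ∞ and let λ, h, f : [0, T) → ℝ solve the cylinder soliton ODE system (λ > 0, λ' = −1 + λh², h' = h/λ − (3/2)h³, f' = (1/2)h²f) with h(0) ≠ 0 and λ(t) → 0 as t → T⁻. Then λ(t)h(t)² → 1/2 as t → T⁻. -/

import Mathlib

open Set Filter Real


set_option maxHeartbeats 1000000 in
/-- If the cylinder soliton ODE system has a solution on `[0, T)`, `T < ∞`, with
`h(0) ≠ 0` and `λ(t) → 0` as `t → T⁻`, then `λ(t)h(t)² → 1/2` as `t → T⁻`. -/
theorem stmt_17 (T : ℝ) (hT : 0 < T) (lam h f : ℝ → ℝ)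
    (hpos : ∀ t ∈ Set.Ico (0 : ℝ) T, 0 < lam t)
    (hlam : ∀ t ∈ Set.Ico (0 : ℝ) T,
      HasDerivWithinAt lam (-1 + lam t * (h t) ^ 2) (Set.Ico 0 T) t)
    (hh : ∀ t ∈ Set.Ico (0 : ℝ) T,
      HasDerivWithinAt h (h t / lam t - (3 / 2) * (h t) ^ 3) (Set.Ico 0 T) t)
    (hf : ∀ t ∈ Set.Ico (0 : ℝ) T,
      HasDerivWithinAt f ((1 / 2) * (h t) ^ 2 * f t) (Set.Ico 0 T) t)
    (hh0 : h 0 ≠ 0)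
    (hlim : Filter.Tendsto lam (nhdsWithin T (Set.Ico 0 T)) (nhds 0)) :
    Filter.Tendsto (fun t => lam t * (h t) ^ 2)
      (nhdsWithin T (Set.Ico 0 T)) (nhds (1 / 2)) := by
  set x : ℝ → ℝ := fun t => lam t * h t ^ 2 with hx_def
  have hmem : ∀ t ∈ Set.Ioo (0:ℝ) T, Set.Ico (0:ℝ) T ∈ nhds t :=
    fun t ht => Ico_mem_nhds ht.1 ht.2
  have hlamc : ContinuousOn lam (Set.Ico 0 T) := fun t ht => (hlam t ht).continuousWithinAt
  have hhc : ContinuousOn h (Set.Ico 0 T) := fun t ht => (hh t ht).continuousWithinAt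
  have hxc : ContinuousOn x (Set.Ico 0 T) := hlamc.mul (hhc.pow 2)
  have hx' : ∀ t ∈ Set.Ioo (0:ℝ) T, HasDerivAt x (h t ^ 2 * (1 - 2 * x t)) t := by
    intro t ht
    have htI : t ∈ Set.Ico (0:ℝ) T := ⟨ht.1.le, ht.2⟩
    have h1 : HasDerivAt lam (-1 + lam t * h t ^ 2) t := (hlam t htI).hasDerivAt (hmem t ht)
    have h2 : HasDerivAt h (h t / lam t - (3/2) * h t ^ 3) t := (hh t htI).hasDerivAt (hmem t ht)
    have h3 := h1.fun_mul (h2.fun_pow 2)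
    refine h3.congr_deriv ?_
    have hl := (hpos t htI).ne'
    show _ = h t ^ 2 * (1 - 2 * (lam t * h t ^ 2))
    field_simp
    ring
  have hx0 : 0 < x 0 := by
    have h2 : 0 < h 0 ^ 2 := lt_of_le_of_ne (sq_nonneg _) (Ne.symm (pow_ne_zero 2 hh0))
    exact mul_pos (hpos 0 ⟨le_refl 0, hT⟩) h2
  have hxpos : ∀ t ∈ Set.Ico (0:ℝ) T, 0 < x t := by
    intro t ht
    rcases eq_or_lt_of_le ht.1 with h0 | h0
    · rwa [← h0]
    have hsub : Set.Icc (0:ℝ) t ⊆ Set.Ico 0 T := fun s hs => ⟨hs.1, lt_of_le_of_lt hs.2 ht.2⟩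
    have hcpt : IsCompact (Set.Icc (0:ℝ) t) := isCompact_Icc
    have hne : (Set.Icc (0:ℝ) t).Nonempty := ⟨0, le_refl 0, ht.1⟩
    obtain ⟨a, haI, ha⟩ := hcpt.exists_isMaxOn hne (hxc.mono hsub)
    obtain ⟨b, hbI, hb⟩ := hcpt.exists_isMinOn hne (hlamc.mono hsub)
    set M : ℝ := max (x a) 0 with hM
    have hδ : 0 < lam b := hpos b (hsub hbI)
    set C : ℝ := 2 * M / lam b with hC
    have hCl : ∀ s ∈ Set.Icc (0:ℝ) t, 2 * x s ≤ C * lam s := by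
      intro s hs
      have h1 : x s ≤ M := le_max_iff.2 (Or.inl (ha hs))
      have h2 : lam b ≤ lam s := hb hs
      have h3 : C * lam b = 2 * M := div_mul_cancel₀ _ hδ.ne'
      have hM0 : 0 ≤ M := le_max_right _ _
      have hC0 : 0 ≤ C := by positivity
      nlinarith
    set ψ : ℝ → ℝ := fun s => Real.exp (C * s) * x s with hψ
    have hψmono : MonotoneOn ψ (Set.Icc 0 t) := by
      apply monotoneOn_of_hasDerivWithinAt_nonneg (f' := fun s =>
          Real.exp (C * s) * C * x s + Real.exp (C * s) * (h s ^ 2 * (1 - 2 * x s)))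
          (convex_Icc 0 t)
      · exact ((Real.continuous_exp.comp (continuous_const.mul continuous_id)).continuousOn).mul
          (hxc.mono hsub)
      · intro s hs
        rw [interior_Icc] at hs
        have hsO : s ∈ Set.Ioo (0:ℝ) T := ⟨hs.1, lt_trans hs.2 ht.2⟩
        have hd : HasDerivAt ψ (Real.exp (C * s) * C * x s
            + Real.exp (C * s) * (h s ^ 2 * (1 - 2 * x s))) s := by
          have he : HasDerivAt (fun u => Real.exp (C * u)) (Real.exp (C * s) * C) s := by
            simpa using ((hasDerivAt_id s).const_mul C).exp
          exact he.mul (hx' s hsO)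
        rw [interior_Icc]
        exact hd.hasDerivWithinAt
      · intro s hs
        rw [interior_Icc] at hs
        have hsI : s ∈ Set.Icc (0:ℝ) t := ⟨hs.1.le, hs.2.le⟩
        have hcl := hCl s hsI
        have hx2 : 0 ≤ x s := mul_nonneg (hpos s (hsub hsI)).le (sq_nonneg _)
        have hE : 0 < Real.exp (C * s) := Real.exp_pos _
        have key : 0 ≤ C * x s + h s ^ 2 * (1 - 2 * x s) := by
          have hxe2 : C * x s = C * (lam s * h s ^ 2) := rfl
          linarith [mul_le_mul_of_nonneg_right hcl (sq_nonneg (h s)), sq_nonneg (h s)]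
        nlinarith
    have h1 := hψmono ⟨le_refl 0, ht.1⟩ ⟨ht.1, le_refl t⟩ ht.1
    have h2 : ψ 0 = x 0 := by simp [hψ]
    have hE : 0 < Real.exp (C * t) := Real.exp_pos _
    have h3 : 0 < Real.exp (C * t) * x t := by rw [← h2] at hx0; exact lt_of_lt_of_le hx0 h1
    nlinarith
  rw [nhdsWithin_Ico_eq_nhdsLT hT] at hlim ⊢
  have hlam_le : ∀ t ∈ Set.Ico (0:ℝ) T, lam t ≤ T - t := by
    have hμ : MonotoneOn (fun s => lam s + s) (Set.Ico 0 T) := by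
      apply monotoneOn_of_hasDerivWithinAt_nonneg (f' := fun s => (-1 + x s) + 1) (convex_Ico 0 T)
      · exact hlamc.add continuousOn_id
      · intro s hs
        rw [interior_Ico] at hs ⊢
        have h1 : HasDerivAt lam (-1 + x s) s := (hlam s ⟨hs.1.le, hs.2⟩).hasDerivAt (hmem s hs)
        exact (h1.add (hasDerivAt_id s)).hasDerivWithinAt
      · intro s hs
        rw [interior_Ico] at hs
        have := hxpos s ⟨hs.1.le, hs.2⟩
        linarith
    intro t ht
    have hten : Filter.Tendsto (fun s => lam s + s) (nhdsWithin T (Set.Iio T)) (nhds (0 + T)) :=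
      hlim.add (tendsto_id.mono_left nhdsWithin_le_nhds)
    have hev : ∀ᶠ s in nhdsWithin T (Set.Iio T), lam t + t ≤ lam s + s := by
      filter_upwards [Ioo_mem_nhdsLT_of_mem ⟨ht.2, le_refl T⟩] with s hs
      exact hμ ht ⟨le_trans ht.1 hs.1.le, hs.2⟩ hs.1.le
    have := ge_of_tendsto hten hev
    linarith
  have hu_anti : AntitoneOn (fun t => (x t - 1/2)^2) (Set.Ico 0 T) := by
    apply antitoneOn_of_hasDerivWithinAt_nonpos
        (f' := fun t => 2 * (x t - 1/2) ^ 1 * (h t ^ 2 * (1 - 2 * x t))) (convex_Ico 0 T)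
    · exact (hxc.sub continuousOn_const).pow 2
    · intro s hs
      rw [interior_Ico] at hs ⊢
      exact (((hx' s hs).sub_const (1/2)).pow 2).hasDerivWithinAt
    · intro s hs
      nlinarith [mul_nonneg (sq_nonneg (h s)) (sq_nonneg (x s - 1/2))]
  have hpick : ∀ K : ℝ, ∃ t ∈ Set.Ico (0:ℝ) T, Real.log (T - t) < K := by
    intro K
    set t := max (T/2) (T - Real.exp K / 2) with htdef
    have hE := Real.exp_pos K
    have ht1 : T - t ≤ Real.exp K / 2 := by
      have := le_max_right (T/2) (T - Real.exp K / 2); linarith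
    have ht2 : 0 < T - t := by
      have h1 : t < T := max_lt (by linarith) (by linarith)
      linarith
    refine ⟨t, ⟨le_trans (by linarith) (le_max_left _ _), by linarith⟩, ?_⟩
    calc Real.log (T - t) < Real.log (Real.exp K) := Real.log_lt_log ht2 (by linarith)
      _ = K := Real.log_exp K
  rw [Metric.tendsto_nhds]
  intro ε hε
  have key : ∃ t0 ∈ Set.Ico (0:ℝ) T, |x t0 - 1/2| < ε := by
    by_contra hcon
    push_neg at hcon
    by_cases hcase : ∀ t ∈ Set.Ico (0:ℝ) T, 1/2 + ε ≤ x t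
    · -- Case A : x ≥ 1/2 + ε everywhere
      have hFanti : AntitoneOn
          (fun s => Real.log (x s) - 2*ε*Real.log (T - s)) (Set.Ico 0 T) := by
        apply antitoneOn_of_hasDerivWithinAt_nonpos
          (f' := fun s => (h s ^ 2 * (1 - 2 * x s)) / x s - 2*ε*(-1/(T - s))) (convex_Ico 0 T)
        · apply ContinuousOn.sub
          · exact hxc.log (fun s hs => (lt_of_lt_of_le (by linarith) (hcase s hs)).ne')
          · exact continuousOn_const.mul ((continuousOn_const.sub continuousOn_id).log
              (fun s hs => (sub_pos.2 hs.2).ne'))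
        · intro s hs
          rw [interior_Ico] at hs ⊢
          have hxne : x s ≠ 0 := (hxpos s ⟨hs.1.le, hs.2⟩).ne'
          have hTs : T - s ≠ 0 := (sub_pos.2 hs.2).ne'
          have d1 : HasDerivAt (fun u => Real.log (x u)) ((h s ^ 2 * (1 - 2 * x s)) / x s) s :=
            (hx' s hs).log hxne
          have d2 : HasDerivAt (fun u => Real.log (T - u)) (-1/(T - s)) s := by
            simpa using ((hasDerivAt_id s).const_sub T).log hTs
          exact (d1.sub (d2.const_mul (2*ε))).hasDerivWithinAt
        · intro s hs
          rw [interior_Ico] at hs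
          have hsI : s ∈ Set.Ico (0:ℝ) T := ⟨hs.1.le, hs.2⟩
          have hl := hpos s hsI
          have hTs : 0 < T - s := sub_pos.2 hs.2
          have hle := hlam_le s hsI
          have hxg := hcase s hsI
          have hxp := hxpos s hsI
          have hxe : x s = lam s * h s ^ 2 := rfl
          have hh2 : 0 < h s ^ 2 := by nlinarith [sq_nonneg (h s)]
          have e1 : (h s ^ 2 * (1 - 2 * x s)) / x s = (1 - 2 * x s) / lam s := by
            rw [hxe]
            rw [div_eq_div_iff (by positivity) hl.ne']
            ring
          rw [e1]
          have e2 : (1 - 2 * x s) / lam s - 2*ε*(-1/(T-s))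
              = ((1 - 2 * x s)*(T-s) + lam s*(2*ε)) / (lam s*(T-s)) := by
            field_simp
            ring
          rw [e2]
          apply div_nonpos_of_nonpos_of_nonneg
          · nlinarith [mul_nonneg (by linarith : (0:ℝ) ≤ 2*x s - 1 - 2*ε) hTs.le,
              mul_nonneg hε.le (by linarith : (0:ℝ) ≤ T - s - lam s)]
          · positivity
      set F := fun s => Real.log (x s) - 2*ε*Real.log (T - s) with hF
      obtain ⟨t, htI, hKt⟩ := hpick ((Real.log (1/2+ε) - F 0)/(2*ε))
      have h1 : F t ≤ F 0 := hFanti ⟨le_refl 0, hT⟩ htI htI.1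
      have h2 : Real.log (1/2+ε) ≤ Real.log (x t) :=
        Real.log_le_log (by linarith) (hcase t htI)
      have h3 : 2*ε*Real.log (T - t) < 2*ε*((Real.log (1/2+ε) - F 0)/(2*ε)) :=
        mul_lt_mul_of_pos_left hKt (by linarith)
      have h4 : 2*ε*((Real.log (1/2+ε) - F 0)/(2*ε)) = Real.log (1/2+ε) - F 0 := by
        field_simp
      simp only [hF] at h1
      linarith [h1, h2, h3, h4]
    · push_neg at hcase
      obtain ⟨t1, ht1, hlt1⟩ := hcase
      have ht1le : x t1 ≤ 1/2 - ε := by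
        rcases le_abs.mp (hcon t1 ht1) with hA | hB
        · linarith
        · linarith
      have hall : ∀ t ∈ Set.Ico (0:ℝ) T, x t ≤ 1/2 - ε := by
        intro t ht
        rcases le_abs.mp (hcon t ht) with hA | hB
        · exfalso
          rcases le_total t1 t with hle | hle
          · have hsub : Set.Icc t1 t ⊆ Set.Ico 0 T :=
              fun s hs => ⟨le_trans ht1.1 hs.1, lt_of_le_of_lt hs.2 ht.2⟩
            have hmemv : (1/2:ℝ) ∈ Set.Icc (x t1) (x t) := ⟨by linarith, by linarith⟩
            obtain ⟨s, hsmem, hseq⟩ := intermediate_value_Icc hle (hxc.mono hsub) hmemv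
            have hc := hcon s (hsub hsmem)
            rw [hseq] at hc
            simp at hc
            linarith
          · have hsub : Set.Icc t t1 ⊆ Set.Ico 0 T :=
              fun s hs => ⟨le_trans ht.1 hs.1, lt_of_le_of_lt hs.2 ht1.2⟩
            have hmemv : (1/2:ℝ) ∈ Set.Icc (x t1) (x t) := ⟨by linarith, by linarith⟩
            obtain ⟨s, hsmem, hseq⟩ := intermediate_value_Icc' hle (hxc.mono hsub) hmemv
            have hc := hcon s (hsub hsmem)
            rw [hseq] at hc
            simp at hc
            linarith
        · linarith
      -- Case B : x ≤ 1/2 - ε everywhere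
      have hεB : 0 < 1/2 - ε := lt_of_lt_of_le (hxpos 0 ⟨le_refl 0, hT⟩) (hall 0 ⟨le_refl 0, hT⟩)
      have hGmono : MonotoneOn
          (fun s => Real.log (x s) + 2*ε*Real.log (T - s)) (Set.Ico 0 T) := by
        apply monotoneOn_of_hasDerivWithinAt_nonneg
          (f' := fun s => (h s ^ 2 * (1 - 2 * x s)) / x s + 2*ε*(-1/(T - s))) (convex_Ico 0 T)
        · apply ContinuousOn.add
          · exact hxc.log (fun s hs => (hxpos s hs).ne')
          · exact continuousOn_const.mul ((continuousOn_const.sub continuousOn_id).log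
              (fun s hs => (sub_pos.2 hs.2).ne'))
        · intro s hs
          rw [interior_Ico] at hs ⊢
          have hxne : x s ≠ 0 := (hxpos s ⟨hs.1.le, hs.2⟩).ne'
          have hTs : T - s ≠ 0 := (sub_pos.2 hs.2).ne'
          have d1 : HasDerivAt (fun u => Real.log (x u)) ((h s ^ 2 * (1 - 2 * x s)) / x s) s :=
            (hx' s hs).log hxne
          have d2 : HasDerivAt (fun u => Real.log (T - u)) (-1/(T - s)) s := by
            simpa using ((hasDerivAt_id s).const_sub T).log hTs
          exact (d1.add (d2.const_mul (2*ε))).hasDerivWithinAt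
        · intro s hs
          rw [interior_Ico] at hs
          have hsI : s ∈ Set.Ico (0:ℝ) T := ⟨hs.1.le, hs.2⟩
          have hl := hpos s hsI
          have hTs : 0 < T - s := sub_pos.2 hs.2
          have hle := hlam_le s hsI
          have hxg := hall s hsI
          have hxp := hxpos s hsI
          have hxe : x s = lam s * h s ^ 2 := rfl
          have hh2 : 0 < h s ^ 2 := by nlinarith [sq_nonneg (h s)]
          have e1 : (h s ^ 2 * (1 - 2 * x s)) / x s = (1 - 2 * x s) / lam s := by
            rw [hxe]
            rw [div_eq_div_iff (by positivity) hl.ne']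
            ring
          rw [e1]
          have e2 : (1 - 2 * x s) / lam s + 2*ε*(-1/(T-s))
              = ((1 - 2 * x s)*(T-s) - lam s*(2*ε)) / (lam s*(T-s)) := by
            field_simp
            ring
          rw [e2]
          apply div_nonneg _ (by positivity)
          nlinarith [mul_nonneg (by linarith : (0:ℝ) ≤ 1 - 2*x s - 2*ε) hTs.le,
            mul_nonneg hε.le (by linarith : (0:ℝ) ≤ T - s - lam s)]
      set G := fun s => Real.log (x s) + 2*ε*Real.log (T - s) with hG
      obtain ⟨t, htI, hKt⟩ := hpick ((G 0 - Real.log (1/2-ε))/(2*ε))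
      have h1 : G 0 ≤ G t := hGmono ⟨le_refl 0, hT⟩ htI htI.1
      have h2 : Real.log (x t) ≤ Real.log (1/2-ε) :=
        Real.log_le_log (hxpos t htI) (hall t htI)
      have h3 : 2*ε*Real.log (T - t) < 2*ε*((G 0 - Real.log (1/2-ε))/(2*ε)) :=
        mul_lt_mul_of_pos_left hKt (by linarith)
      have h4 : 2*ε*((G 0 - Real.log (1/2-ε))/(2*ε)) = G 0 - Real.log (1/2-ε) := by
        field_simp
      simp only [hG] at h1
      linarith [h1, h2, h3, h4]
  obtain ⟨t0, ht0, hlt0⟩ := key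
  filter_upwards [Ioo_mem_nhdsLT_of_mem ⟨ht0.2, le_refl T⟩] with t ht
  have htI : t ∈ Set.Ico (0:ℝ) T := ⟨le_trans ht0.1 ht.1.le, ht.2⟩
  have hmono := hu_anti ht0 htI ht.1.le
  rw [Real.dist_eq]
  nlinarith [abs_nonneg (x t - 1/2), sq_abs (x t - 1/2), sq_abs (x t0 - 1/2),
    abs_nonneg (x t0 - 1/2)]
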